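/- For G(u) = u + u^2 - 2u^3, H = G', and ρ ∈ [0, 1/6), the point ρ* = (1-2ρ)/4 is the unique zero in (ρ, 1] of the function u ↦ S[u; ρ] - H(u), where S[u;ρ] = (G(ρ) - G(u))/(ρ - u). -/
import Mathlib

theorem stmt_5 (G H : ℝ → ℝ) (hG : ∀ u, G u = u + u^2 - 2*u^3)
    (hH : ∀ u, H u = 1 + 2*u - 6*u^2)
    (ρ : ℝ) (hρ : ρ ∈ Set.Ico (0:ℝ) (1/6)) :
    ∀ u ∈ Set.Ioc ρ (1:ℝ), ((G ρ - G u) / (ρ - u) - H u = 0 ↔ u = (1 - 2*ρ)/4) := by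
  intro u hu
  have hne : u - ρ ≠ 0 := sub_ne_zero.mpr (ne_of_gt hu.1)
  have hne' : ρ - u ≠ 0 := sub_ne_zero.mpr (ne_of_lt hu.1)
  have key : (G ρ - G u) / (ρ - u) - H u = 4*(u-ρ)*(u-(1-2*ρ)/4) := by
    rw [hG, hG, hH]
    field_simp
    ring
  rw [key]
  constructor
  · intro h
    rcases mul_eq_zero.mp h with h1 | h2
    · rcases mul_eq_zero.mp h1 with h0 | h3
      · norm_num at h0
      · exact absurd h3 hne
    · linarith [sub_eq_zero.mp h2]
  · intro h; rw [h]; ring
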